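/- Let M, N ∈ I_X. Then Σ_{D ∈ I_X, D ≤ N} C_D(M) equals N(N) if N ≤ M, and equals 0 otherwise. -/

import Mathlib

open Finset Filter Topology Asymptotics
open scoped Classical

/-- The Möbius function on `I_X = X →₀ ℕ`: `μ A = (-1)^(∑ₓ A x)` if `A x ≤ 1`
for every `x`, and `0` otherwise. -/
noncomputable def mob {X : Type*} (A : X →₀ ℕ) : ℤ :=
  if ∀ x, A x ≤ 1 then (-1) ^ (A.sum fun _ n => n) else 0

/-- The generalized Ramanujan sum `C_K(M) = ∑_{D ≤ M, D ≤ K} N(D)·μ(K − D)`. -/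
noncomputable def ram {X : Type*} [DecidableEq X] (Nrm : (X →₀ ℕ) → ℤ)
    (K M : X →₀ ℕ) : ℤ :=
  ∑ D ∈ Finset.Iic (M ⊓ K), Nrm D * mob (K - D)

/-- auxiliary local factor of `mob` -/
noncomputable def mg (n : ℕ) : ℤ := if n ≤ 1 then (-1) ^ n else 0

lemma mob_eq_prod {X : Type*} (E : X →₀ ℕ) (s : Finset X) (hs : E.support ⊆ s) :
    mob E = ∏ x ∈ s, mg (E x) := by
  unfold mob
  split_ifs with h
  · have h1 : ∀ x ∈ s, mg (E x) = (-1 : ℤ) ^ (E x) := fun x _ => if_pos (h x)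
    rw [Finset.prod_congr rfl h1, Finset.prod_pow_eq_pow_sum]
    congr 1
    rw [Finsupp.sum]
    exact (Finset.sum_subset hs (fun x _ hx => Finsupp.notMem_support_iff.mp hx))
  · push_neg at h
    obtain ⟨x, hx⟩ := h
    have hxs : x ∈ s := hs (Finsupp.mem_support_iff.mpr (by omega))
    refine (Finset.prod_eq_zero (f := fun x => mg (E x)) hxs ?_).symm
    simp only [mg]
    rw [if_neg (by omega)]

lemma sum_mg (n : ℕ) (hn : n ≠ 0) : ∑ k ∈ Finset.Iic n, mg k = 0 := by
  induction n with
  | zero => omega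
  | succ m ih =>
    have hins : Finset.Iic (m + 1) = insert (m + 1) (Finset.Iic m) := by
      ext k; simp only [Finset.mem_Iic, Finset.mem_insert]; omega
    rw [hins, Finset.sum_insert (by simp)]
    rcases Nat.eq_zero_or_pos m with h | h
    · subst h
      rw [show Finset.Iic 0 = {0} by ext k; simp, Finset.sum_singleton]
      simp [mg]
    · rw [ih (by omega), add_zero]
      exact if_neg (by omega)

lemma sum_Iic_mob {X : Type*} (A : X →₀ ℕ) :
    ∑ E ∈ Finset.Iic A, mob E = if A = 0 then 1 else 0 := by
  rcases eq_or_ne A 0 with rfl | hA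
  · have h1 : Finset.Iic (0 : X →₀ ℕ) = {0} := by
      ext E; simp [Finset.mem_Iic, le_zero_iff]
    rw [if_pos rfl, h1, Finset.sum_singleton]
    simp [mob]
  · rw [if_neg hA]
    have hIic : Finset.Iic A = A.support.finsupp (fun x => Finset.Iic (A x)) := by
      ext E
      simp only [Finset.mem_Iic, Finset.mem_finsupp_iff, Finset.mem_Iic]
      constructor
      · intro h
        exact ⟨Finsupp.support_mono h, fun x _ => Finsupp.le_def.mp h x⟩
      · rintro ⟨h1, h2⟩
        refine Finsupp.le_def.mpr fun x => ?_
        by_cases hx : x ∈ A.support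
        · exact h2 x hx
        · have : x ∉ E.support := fun hxE => hx (h1 hxE)
          rw [Finsupp.notMem_support_iff.mp this]
          exact Nat.zero_le _
    rw [hIic, Finset.finsupp, Finset.sum_map]
    simp only [Function.Embedding.coeFn_mk]
    have key : ∀ p ∈ A.support.pi (fun x => Finset.Iic (A x)),
        mob (Finsupp.indicator A.support p) = ∏ x ∈ A.support.attach, mg (p x.1 x.2) := by
      intro p _
      rw [mob_eq_prod _ A.support (Finsupp.support_indicator_subset _ _), ← Finset.prod_attach]
      exact Finset.prod_congr rfl fun x _ => by rw [Finsupp.indicator_of_mem x.2]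
    rw [Finset.sum_congr rfl key,
      ← Finset.prod_sum A.support (fun x => Finset.Iic (A x)) (fun _ k => mg k)]
    obtain ⟨x, hx⟩ := Finsupp.support_nonempty_iff.mpr hA
    exact Finset.prod_eq_zero hx (sum_mg _ (Finsupp.mem_support_iff.mp hx))

/-- For `M, L ∈ I_X`, `∑_{D ≤ L} C_D(M)` equals `N(L)` if `L ≤ M` and `0` otherwise. -/
theorem sum_ram_varying_modulus {X : Type*} [Nonempty X] [DecidableEq X]
    (Nrm : (X →₀ ℕ) → ℤ)
    (hge : ∀ A, 1 ≤ Nrm A) (h0 : Nrm 0 = 1) (hgt : ∀ A, A ≠ 0 → 1 < Nrm A)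
    (hmul : ∀ A B, Nrm (A + B) = Nrm A * Nrm B) (M L : X →₀ ℕ) :
    ∑ D ∈ Finset.Iic L, ram Nrm D M = if L ≤ M then Nrm L else 0 := by
  unfold ram
  rw [Finset.sum_sigma']
  have hre : ∑ p ∈ (Finset.Iic L).sigma (fun K => Finset.Iic (M ⊓ K)),
      Nrm p.2 * mob (p.1 - p.2)
      = ∑ q ∈ (Finset.Iic (M ⊓ L)).sigma (fun D => Finset.Iic (L - D)),
      Nrm q.1 * mob q.2 := by
    refine Finset.sum_nbij' (fun p => ⟨p.2, p.1 - p.2⟩) (fun q => ⟨q.1 + q.2, q.1⟩) ?_ ?_ ?_ ?_ ?_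
    · rintro ⟨K, D⟩ hp
      simp only [Finset.mem_sigma, Finset.mem_Iic] at hp ⊢
      obtain ⟨hKL, hD⟩ := hp
      exact ⟨le_inf (hD.trans inf_le_left) ((hD.trans inf_le_right).trans hKL),
        tsub_le_tsub_right hKL _⟩
    · rintro ⟨D, E⟩ hq
      simp only [Finset.mem_sigma, Finset.mem_Iic] at hq ⊢
      obtain ⟨hD, hE⟩ := hq
      have hDL : D ≤ L := hD.trans inf_le_right
      refine ⟨(le_tsub_iff_left hDL).mp hE, le_inf (hD.trans inf_le_left) le_self_add⟩
    · rintro ⟨K, D⟩ hp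
      simp only [Finset.mem_sigma, Finset.mem_Iic] at hp
      have : D ≤ K := hp.2.trans inf_le_right
      simp [add_tsub_cancel_of_le this]
    · rintro ⟨D, E⟩ _
      simp [add_tsub_cancel_left]
    · rintro ⟨K, D⟩ hp
      simp only [Finset.mem_sigma, Finset.mem_Iic] at hp
      rfl
  rw [hre, Finset.sum_sigma]
  have h2 : ∀ D ∈ Finset.Iic (M ⊓ L), (∑ E ∈ Finset.Iic (L - D), Nrm D * mob E)
      = if D = L then Nrm D else 0 := by
    intro D hD
    rw [← Finset.mul_sum, show ∑ E ∈ Finset.Iic (L - D), mob E = if L - D = 0 then 1 else 0 by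
      convert sum_Iic_mob (L - D)]
    have hDL : D ≤ L := (Finset.mem_Iic.mp hD).trans inf_le_right
    by_cases h : D = L
    · subst h; simp
    · rw [if_neg (fun hLD : L - D = 0 => h (le_antisymm hDL (tsub_eq_zero_iff_le.mp hLD))),
        mul_zero, if_neg h]
  rw [Finset.sum_congr rfl h2, Finset.sum_ite_eq' _ L (fun D => Nrm D)]
  simp [Finset.mem_Iic, le_inf_iff]
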